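/- Let x = (x₀, x̄) ∈ ℝ × ℝᵈ and z = (z₀, z̄) ∈ ℝ × ℝᵈ satisfy x₀ ≥ ‖x̄‖ and z₀ ≥ ‖z̄‖ (i.e., both lie in the second-order cone). If ⟨x, z⟩ = x₀z₀ + ⟨x̄, z̄⟩ ≤ μ for some μ ≥ 0, then ‖z₀·x̄ + x₀·z̄‖ ≤ √(2·x₀·z₀·μ). -/

import Mathlib

open scoped RealInnerProductSpace

/-- Second-order cone near-complementarity bound. -/
theorem socp_complementarity_bound {d : ℕ} (x0 z0 μ : ℝ)
    (xb zb : EuclideanSpace ℝ (Fin d))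
    (hx : ‖xb‖ ≤ x0) (hz : ‖zb‖ ≤ z0) (hμ : 0 ≤ μ)
    (hgap : x0 * z0 + (inner ℝ xb zb : ℝ) ≤ μ) :
    ‖z0 • xb + x0 • zb‖ ≤ Real.sqrt (2 * x0 * z0 * μ) := by
  have hx0 : 0 ≤ x0 := le_trans (norm_nonneg _) hx
  have hz0 : 0 ≤ z0 := le_trans (norm_nonneg _) hz
  have hsq : ‖z0 • xb + x0 • zb‖ ^ 2 ≤ 2 * x0 * z0 * μ := by
    have h1 : ‖z0 • xb + x0 • zb‖ ^ 2 =
        ‖z0 • xb‖ ^ 2 + 2 * (inner ℝ (z0 • xb) (x0 • zb) : ℝ) + ‖x0 • zb‖ ^ 2 := by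
      rw [norm_add_sq_real]
    rw [h1, norm_smul, norm_smul, real_inner_smul_left, real_inner_smul_right,
      Real.norm_eq_abs, Real.norm_eq_abs, abs_of_nonneg hx0, abs_of_nonneg hz0]
    have h2 : ‖xb‖ ^ 2 ≤ x0 ^ 2 := by nlinarith [norm_nonneg xb]
    have h3 : ‖zb‖ ^ 2 ≤ z0 ^ 2 := by nlinarith [norm_nonneg zb]
    have h4 : z0 ^ 2 * ‖xb‖ ^ 2 ≤ z0 ^ 2 * x0 ^ 2 :=
      mul_le_mul_of_nonneg_left h2 (sq_nonneg z0)
    have h5 : x0 ^ 2 * ‖zb‖ ^ 2 ≤ x0 ^ 2 * z0 ^ 2 :=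
      mul_le_mul_of_nonneg_left h3 (sq_nonneg x0)
    have h6 : 2 * x0 * z0 * (x0 * z0 + (inner ℝ xb zb : ℝ)) ≤ 2 * x0 * z0 * μ :=
      mul_le_mul_of_nonneg_left hgap (by positivity)
    nlinarith
  calc ‖z0 • xb + x0 • zb‖ = Real.sqrt (‖z0 • xb + x0 • zb‖ ^ 2) :=
        (Real.sqrt_sq (norm_nonneg _)).symm
    _ ≤ Real.sqrt (2 * x0 * z0 * μ) := Real.sqrt_le_sqrt hsq
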